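/- Let V_G ⊆ U_H and V_M ⊆ Ū_H be non-empty sets. Then the set (V_M ∩ (V_G ∪ V_G⁻¹))* of all finite products of elements of V_M ∩ (V_G ∪ V_G⁻¹) and the set Mon⟨V_M⟩ ∩ ⟨V_G⟩ represent exactly the same set of elements of H, where Mon⟨V_M⟩ is the submonoid of H generated by V_M and ⟨V_G⟩ is the subgroup of H generated by V_G. -/

import Mathlib

/-- `S` is a free basis of the group `G`: the induced map from the free group
on `S` is an isomorphism. -/
def IsFreeBasis {G : Type*} [Group G] (S : Set G) : Prop :=
  Function.Bijective ⇑(FreeGroup.lift (Subtype.val : S → G))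

theorem statement_1 (X : Type*) [Finite X]
    (UH : Set (FreeGroup X)) (hUH : IsFreeBasis UH)
    (VG VM : Set (FreeGroup X)) (hVG : VG ⊆ UH) (hVM : VM ⊆ UH ∪ UH⁻¹)
    (hVGne : VG.Nonempty) (hVMne : VM.Nonempty) :
    (Submonoid.closure (VM ∩ (VG ∪ VG⁻¹)) : Set (FreeGroup X)) =
      ↑(Submonoid.closure VM) ∩ ↑(Subgroup.closure VG) := by
  classical
  set e : FreeGroup UH ≃* FreeGroup X := MulEquiv.ofBijective _ hUH with he
  set ρ : FreeGroup X →* FreeGroup X :=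
    (FreeGroup.lift (fun u : UH => if (u : FreeGroup X) ∈ VG then (u : FreeGroup X) else 1)).comp
      e.symm.toMonoidHom with hρ
  have hρ_basis : ∀ u (hu : u ∈ UH), ρ u = if u ∈ VG then u else 1 := by
    intro u hu
    have h1 : e.symm u = FreeGroup.of (⟨u, hu⟩ : UH) := by
      rw [MulEquiv.symm_apply_eq]
      simp [he, MulEquiv.ofBijective]
      show u = FreeGroup.lift (Subtype.val : UH → FreeGroup X) (FreeGroup.of ⟨u, hu⟩)
      simp
    simp [hρ, h1]
  have hρ_VG : ∀ w ∈ Subgroup.closure VG, ρ w = w := by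
    intro w hw
    induction hw using Subgroup.closure_induction with
    | mem x hx => rw [hρ_basis x (hVG hx), if_pos hx]
    | one => simp
    | mul x y _ _ hx hy => rw [map_mul, hx, hy]
    | inv x _ hx => rw [map_inv, hx]
  have hρ_VM : ∀ u ∈ VM, ρ u ∈ Submonoid.closure (VM ∩ (VG ∪ VG⁻¹)) := by
    intro u hu
    rcases hVM hu with h | h
    · rw [hρ_basis u h]
      split_ifs with hg
      · exact Submonoid.subset_closure ⟨hu, Or.inl hg⟩
      · exact one_mem _
    · have h' : u⁻¹ ∈ UH := h
      have : ρ u = (ρ u⁻¹)⁻¹ := by rw [map_inv, inv_inv]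
      rw [this, hρ_basis _ h']
      split_ifs with hg
      · rw [inv_inv]
        exact Submonoid.subset_closure ⟨hu, Or.inr (by simpa [Set.mem_inv] using hg)⟩
      · simpa using one_mem (Submonoid.closure (VM ∩ (VG ∪ VG⁻¹)))
  ext w
  constructor
  · intro hw
    refine ⟨Submonoid.closure_mono Set.inter_subset_left hw, ?_⟩
    have : Submonoid.closure (VM ∩ (VG ∪ VG⁻¹)) ≤ (Subgroup.closure VG).toSubmonoid := by
      rw [Submonoid.closure_le]
      rintro x ⟨-, hx | hx⟩
      · exact Subgroup.subset_closure hx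
      · have h2 := inv_mem (Subgroup.subset_closure (Set.mem_inv.mp hx))
        simpa using h2
    exact this hw
  · rintro ⟨hm, hg⟩
    obtain ⟨l, hl, rfl⟩ := Submonoid.exists_list_of_mem_closure hm
    have hfix : ρ l.prod = l.prod := hρ_VG _ hg
    rw [← hfix, map_list_prod]
    exact list_prod_mem (by
      intro x hx
      obtain ⟨y, hy, rfl⟩ := List.mem_map.mp hx
      exact hρ_VM y (hl y hy))
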